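/- Let L be the Laplacian of an irreducible continuous-time Markov chain on a finite state space V with stationary distribution μ, and let j* = (u*, v*) be an edge of the underlying graph. Then the response vector δ = dμ(ε)/dε|_{ε=0} (for the perturbation L(ε) = L + ε(E_{v*u*} − E_{u*u*})) satisfies δ_{u*} < 0 and δ_{v*} > 0, for every choice of positive transition rates. -/

import Mathlib

open Finset

/-- If a nonnegative vector satisfies the stationarity equation, its support is
closed under edges of positive rate. -/
lemma support_closed {V : Type*} [Fintype V] [DecidableEq V] (ℓ : V → V → ℝ)
    (hnn : ∀ u v, 0 ≤ ℓ u v) (x : V → ℝ) (hx0 : ∀ v, 0 ≤ x v)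
    (hx : ∀ w, ∑ z, ℓ z w * x z = x w * ∑ z, ℓ w z)
    {u v : V} (h : Relation.ReflTransGen (fun a b => 0 < ℓ a b) u v)
    (hu : 0 < x u) : 0 < x v := by
  induction h with
  | refl => exact hu
  | tail hpath hstep ih =>
    rename_i m c
    have hlhs : 0 < ∑ z, ℓ z c * x z := by
      have h1 : ℓ m c * x m ≤ ∑ z, ℓ z c * x z :=
        Finset.single_le_sum (fun z _ => mul_nonneg (hnn z c) (hx0 z)) (mem_univ m)
      exact lt_of_lt_of_le (mul_pos hstep ih) h1
    rw [hx c] at hlhs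
    by_contra hc
    push_neg at hc
    have : x c * ∑ z, ℓ c z ≤ 0 :=
      mul_nonpos_of_nonpos_of_nonneg hc (Finset.sum_nonneg fun z _ => hnn c z)
    linarith

/-- A vector in the kernel of the Laplacian of an irreducible chain with total
mass `1` is everywhere positive. -/
lemma kernel_pos {V : Type*} [Fintype V] [DecidableEq V] (ℓ : V → V → ℝ)
    (hnn : ∀ u v, 0 ≤ ℓ u v)
    (hconn : ∀ u v, Relation.ReflTransGen (fun a b => 0 < ℓ a b) u v)
    (x : V → ℝ)
    (hx : ∀ w, ∑ z, ℓ z w * x z = x w * ∑ z, ℓ w z)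
    (hsum : ∑ v, x v = 1) : ∀ v, 0 < x v := by
  have habs : ∀ w, ∑ z, ℓ z w * |x z| = |x w| * ∑ z, ℓ w z := by
    have hge : ∀ w, |x w| * (∑ z, ℓ w z) ≤ ∑ z, ℓ z w * |x z| := by
      intro w
      calc |x w| * (∑ z, ℓ w z) = |x w * ∑ z, ℓ w z| := by
            rw [abs_mul, abs_of_nonneg (Finset.sum_nonneg fun z _ => hnn w z)]
        _ = |∑ z, ℓ z w * x z| := by rw [hx w]
        _ ≤ ∑ z, |ℓ z w * x z| := Finset.abs_sum_le_sum_abs _ _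
        _ = ∑ z, ℓ z w * |x z| := by
            refine Finset.sum_congr rfl fun z _ => ?_
            rw [abs_mul, abs_of_nonneg (hnn z w)]
    have hsum0 : ∑ w, ((∑ z, ℓ z w * |x z|) - |x w| * ∑ z, ℓ w z) = 0 := by
      rw [Finset.sum_sub_distrib, Finset.sum_comm]
      rw [sub_eq_zero]
      refine Finset.sum_congr rfl fun z _ => ?_
      rw [Finset.mul_sum]
      refine Finset.sum_congr rfl fun w _ => ?_
      ring
    intro w
    have := (Finset.sum_eq_zero_iff_of_nonneg
      (fun w _ => sub_nonneg.2 (hge w))).1 hsum0 w (mem_univ w)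
    linarith
  have hex : ∃ a, 0 < x a := by
    by_contra hc
    push_neg at hc
    have : ∑ v, x v ≤ 0 := Finset.sum_nonpos fun v _ => hc v
    linarith
  obtain ⟨a, ha⟩ := hex
  have hnonneg : ∀ v, 0 ≤ x v := by
    intro b
    by_contra hb
    push_neg at hb
    set xp : V → ℝ := fun v => (|x v| + x v) / 2 with hxp
    have hxp0 : ∀ v, 0 ≤ xp v := by
      intro v; have := neg_abs_le (x v); simp only [hxp]; linarith
    have hxpeq : ∀ w, ∑ z, ℓ z w * xp z = xp w * ∑ z, ℓ w z := by
      intro w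
      simp only [hxp]
      have : ∀ z, ℓ z w * ((|x z| + x z) / 2) = (ℓ z w * |x z|) / 2 + (ℓ z w * x z) / 2 := by
        intro z; ring
      rw [Finset.sum_congr rfl fun z _ => this z, Finset.sum_add_distrib,
        ← Finset.sum_div, ← Finset.sum_div, habs w, hx w]
      ring
    have hpa : 0 < xp a := by
      simp only [hxp]
      have : 0 ≤ |x a| := abs_nonneg _
      positivity
    have := support_closed ℓ hnn xp hxp0 hxpeq (hconn a b) hpa
    have hxb : xp b = 0 := by
      simp only [hxp, abs_of_neg hb]; ring
    linarith
  intro v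
  exact support_closed ℓ hnn x hnonneg hx (hconn a v) ha

/-- Maximum principle: if `∑_z c z w (y z - y w) = g w` with `g > 0` at `a`,
`g = 0` away from `a, b`, then `y` attains its maximum at `b`. -/
lemma maxprin {V : Type*} [Fintype V] [DecidableEq V] (c : V → V → ℝ)
    (hc : ∀ u v, 0 ≤ c u v)
    (hconn : ∀ u v, Relation.ReflTransGen (fun p q => 0 < c p q) u v)
    (y : V → ℝ) (a b : V) (g : V → ℝ)
    (hga : 0 < g a) (hg0 : ∀ w, w ≠ a → w ≠ b → g w = 0)
    (heq : ∀ w, ∑ z, c z w * (y z - y w) = g w) :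
    ∀ w, y w ≤ y b := by
  have hne : (univ : Finset V).Nonempty := ⟨a, mem_univ a⟩
  set M := univ.sup' hne y with hM
  have hle : ∀ w, y w ≤ M := fun w => Finset.le_sup' y (mem_univ w)
  have hclosure : ∀ w, y w = M → w ≠ b → ∀ z, 0 < c z w → y z = M := by
    intro w hw hwb z hz
    have hterm : ∀ z', c z' w * (y z' - y w) ≤ 0 := fun z' =>
      mul_nonpos_of_nonneg_of_nonpos (hc z' w) (by rw [hw]; linarith [hle z'])
    have hwa : w ≠ a := by
      intro h
      subst h
      have : ∑ z', c z' w * (y z' - y w) ≤ 0 := Finset.sum_nonpos fun z' _ => hterm z'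
      rw [heq w] at this; linarith
    have hsum0 : ∑ z', c z' w * (y z' - y w) = 0 := by rw [heq w, hg0 w hwa hwb]
    have := (Finset.sum_eq_zero_iff_of_nonpos (fun z' _ => hterm z')).1 hsum0 z (mem_univ z)
    have hzy : y z - y w = 0 := by
      rcases mul_eq_zero.1 this with h | h
      · exact absurd h (ne_of_gt hz)
      · exact h
    rw [hw] at hzy; linarith
  have hamax : y a ≠ M := by
    intro h
    have hterm : ∀ z', c z' a * (y z' - y a) ≤ 0 := fun z' =>
      mul_nonpos_of_nonneg_of_nonpos (hc z' a) (by rw [h]; linarith [hle z'])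
    have : ∑ z', c z' a * (y z' - y a) ≤ 0 := Finset.sum_nonpos fun z' _ => hterm z'
    rw [heq a] at this; linarith
  obtain ⟨w0, _, hw0⟩ := Finset.exists_mem_eq_sup' hne y
  have key : ∀ w, Relation.ReflTransGen (fun p q => 0 < c p q) a w → y w = M → y b = M := by
    intro w hpath
    induction hpath with
    | refl => intro h; exact absurd h hamax
    | tail hp hstep ih =>
      rename_i m w'
      intro hw'
      by_cases hb : w' = b
      · rwa [hb] at hw'
      · exact ih (hclosure w' hw' hb m hstep)
  have hyb : y b = M := key w0 (hconn a w0) hw0.symm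
  intro w
  rw [hyb]; exact hle w

/-- The Laplacian of transition rates `ℓ` (`ℓ u v` = rate from `u` to `v`). -/
noncomputable def CTMCLaplacian {V : Type*} [Fintype V] [DecidableEq V] (ℓ : V → V → ℝ) :
    Matrix V V ℝ :=
  fun v u => if v = u then -∑ w ∈ Finset.univ.filter (· ≠ u), ℓ u w else ℓ u v

lemma lap_sum {V : Type*} [Fintype V] [DecidableEq V] (ℓ : V → V → ℝ)
    (hself : ∀ u, ℓ u u = 0) (x : V → ℝ) (w : V) :
    ∑ u, CTMCLaplacian ℓ w u * x u = (∑ z, ℓ z w * x z) - x w * ∑ z, ℓ w z := by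
  have hfil : ∑ z ∈ Finset.univ.filter (· ≠ w), ℓ w z = ∑ z, ℓ w z := by
    apply Finset.sum_filter_of_ne
    intro z _ hz h
    rw [h, hself] at hz; exact hz rfl
  have hterm : ∀ u, CTMCLaplacian ℓ w u * x u
      = ℓ u w * x u + (if w = u then (-(∑ z, ℓ w z) - ℓ w w) * x u else 0) := by
    intro u
    by_cases h : w = u
    · subst h
      simp only [CTMCLaplacian, if_pos rfl, hfil, if_true]
      ring
    · simp [CTMCLaplacian, h]
  rw [Finset.sum_congr rfl fun u _ => hterm u, Finset.sum_add_distrib,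
    Finset.sum_ite_eq univ w _, if_pos (mem_univ w), hself]
  ring

/-- For an irreducible CTMC with positive rates, the response vector
`δ = dμ(ε)/dε|₀` of the stationary distribution to the perturbation
`L(ε) = L + ε (E_{v*u*} - E_{u*u*})` of an edge `(u*, v*)` satisfies
`δ_{u*} < 0` and `δ_{v*} > 0`. -/
theorem stmt7 {V : Type*} [Fintype V] [DecidableEq V] (ℓ : V → V → ℝ)
    (hnn : ∀ u v : V, 0 ≤ ℓ u v) (hself : ∀ u : V, ℓ u u = 0)
    (hconn : ∀ u v : V, Relation.ReflTransGen (fun a b => 0 < ℓ a b) u v)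
    (ustar vstar : V) (hedge : 0 < ℓ ustar vstar)
    (μ : ℝ → V → ℝ) (δ : V → ℝ)
    (hμ : ∀ᶠ ε in nhds (0 : ℝ),
      (CTMCLaplacian ℓ + ε • (Matrix.single vstar ustar (1 : ℝ) -
          Matrix.single ustar ustar (1 : ℝ))).mulVec (μ ε) = 0 ∧
      ∑ v : V, μ ε v = 1)
    (hδ : HasDerivAt μ δ 0) :
    δ ustar < 0 ∧ 0 < δ vstar := by
  classical
  have huv : ustar ≠ vstar := by
    intro h
    rw [h] at hedge
    rw [hself] at hedge
    exact lt_irrefl _ hedge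
  set A : Matrix V V ℝ := Matrix.single vstar ustar (1 : ℝ) -
      Matrix.single ustar ustar (1 : ℝ) with hAdef
  obtain ⟨hμeq0, hμsum0⟩ := hμ.self_of_nhds
  set μ0 : V → ℝ := μ 0 with hμ0def
  -- stationarity of μ0
  have hL0 : (CTMCLaplacian ℓ).mulVec μ0 = 0 := by
    have h := hμeq0
    rw [zero_smul, add_zero] at h
    exact h
  have hstat : ∀ w, ∑ z, ℓ z w * μ0 z = μ0 w * ∑ z, ℓ w z := by
    intro w
    have h := congrFun hL0 w
    simp only [Matrix.mulVec, dotProduct, Pi.zero_apply] at h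
    rw [lap_sum ℓ hself μ0 w] at h
    linarith
  have hpos : ∀ v, 0 < μ0 v := kernel_pos ℓ hnn hconn μ0 hstat hμsum0
  -- derivative of the stationarity equation
  have hδu : ∀ u, HasDerivAt (fun ε => μ ε u) (δ u) 0 := fun u => hasDerivAt_pi.1 hδ u
  have hμ1 : ∀ᶠ ε in nhds (0 : ℝ), (CTMCLaplacian ℓ + ε • A).mulVec (μ ε) = 0 := by
    filter_upwards [hμ] with ε hε using hε.1
  have hD : ∀ w, (∑ u, A w u * μ0 u) + ∑ u, CTMCLaplacian ℓ w u * δ u = 0 := by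
    intro w
    have hDd : HasDerivAt (fun ε => ∑ u, (CTMCLaplacian ℓ w u + ε * A w u) * μ ε u)
        (∑ u, (A w u * μ 0 u + (CTMCLaplacian ℓ w u + 0 * A w u) * δ u)) 0 := by
      apply HasDerivAt.fun_sum
      intro u _
      have h1 : HasDerivAt (fun ε : ℝ => CTMCLaplacian ℓ w u + ε * A w u) (A w u) 0 := by
        simpa using (hasDerivAt_mul_const (A w u)).const_add (CTMCLaplacian ℓ w u)
      exact h1.mul (hδu u)
    have hz : HasDerivAt (fun ε => ∑ u, (CTMCLaplacian ℓ w u + ε * A w u) * μ ε u) 0 0 := by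
      apply (hasDerivAt_const (0 : ℝ) (0 : ℝ)).congr_of_eventuallyEq
      filter_upwards [hμ1] with ε hε
      have h := congrFun hε w
      simp only [Matrix.mulVec, dotProduct, Matrix.add_apply, Matrix.smul_apply,
        smul_eq_mul, Pi.zero_apply] at h
      exact h
    have h := hDd.unique hz
    rw [Finset.sum_add_distrib] at h
    simp only [zero_mul, add_zero] at h
    rw [← hμ0def] at h
    linarith
  -- the perturbation source term
  have hg : ∀ w, ∑ u, A w u * μ0 u
      = (if vstar = w then μ0 ustar else 0) - (if ustar = w then μ0 ustar else 0) := by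
    intro w
    simp only [hAdef, Matrix.single, Matrix.sub_apply, Matrix.of_apply, sub_mul, ite_mul,
      one_mul, zero_mul, Finset.sum_sub_distrib, ite_and]
    congr 1 <;> by_cases h : vstar = w <;> by_cases h2 : ustar = w <;>
      simp [h, h2, Finset.sum_ite_eq]
  set g : V → ℝ := fun w =>
    (if ustar = w then μ0 ustar else 0) - (if vstar = w then μ0 ustar else 0) with hgdef
  have hkey : ∀ w, (∑ z, ℓ z w * δ z) - δ w * (∑ z, ℓ w z) = g w := by
    intro w
    have h1 := hD w
    rw [lap_sum ℓ hself δ w, hg w] at h1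
    simp only [hgdef]
    linarith
  -- sum of δ is zero
  have hsumδ : ∑ v, δ v = 0 := by
    have hd : HasDerivAt (fun ε => ∑ v, μ ε v) (∑ v, δ v) 0 :=
      HasDerivAt.fun_sum fun v _ => hδu v
    have hz : HasDerivAt (fun ε => ∑ v, μ ε v) 0 0 := by
      apply (hasDerivAt_const (0 : ℝ) (1 : ℝ)).congr_of_eventuallyEq
      filter_upwards [hμ] with ε hε using hε.2
    exact hd.unique hz
  -- ratio vector and conductances
  set y : V → ℝ := fun v => δ v / μ0 v with hy
  set c : V → V → ℝ := fun z w => ℓ z w * μ0 z with hc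
  have hcnn : ∀ u v, 0 ≤ c u v := fun u v => mul_nonneg (hnn u v) (hpos u).le
  have hcconn : ∀ u v, Relation.ReflTransGen (fun p q => 0 < c p q) u v := by
    intro u v
    refine Relation.ReflTransGen.mono ?_ u v (hconn u v)
    intro a b hab
    exact mul_pos hab (hpos a)
  have hδy : ∀ v, δ v = y v * μ0 v := by
    intro v
    simp only [hy]
    rw [div_mul_cancel₀ _ (hpos v).ne']
  have heq : ∀ w, ∑ z, c z w * (y z - y w) = g w := by
    intro w
    have e1 : ∀ z, c z w * (y z - y w) = ℓ z w * δ z - c z w * y w := by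
      intro z
      have hz := (hpos z).ne'
      simp only [hc, hy]
      field_simp
    rw [Finset.sum_congr rfl fun z _ => e1 z, Finset.sum_sub_distrib, ← Finset.sum_mul]
    have h2 : ∑ z, c z w = μ0 w * ∑ z, ℓ w z := hstat w
    rw [h2]
    have h3 : μ0 w * (∑ z, ℓ w z) * y w = δ w * ∑ z, ℓ w z := by
      rw [hδy w]; ring
    rw [h3]
    exact hkey w
  -- apply the maximum principle in both directions
  have hgu : 0 < g ustar := by
    have h1 : g ustar = μ0 ustar := by
      simp [hgdef, Ne.symm huv]
    rw [h1]
    have := hpos ustar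
    linarith
  have hgv : g vstar < 0 := by
    have h1 : g vstar = -μ0 ustar := by
      simp [hgdef, huv]
    rw [h1]
    have := hpos ustar
    linarith
  have hg0 : ∀ w, w ≠ ustar → w ≠ vstar → g w = 0 := by
    intro w h1 h2
    simp only [hgdef, if_neg (Ne.symm h1), if_neg (Ne.symm h2), sub_zero]
  have hmax : ∀ w, y w ≤ y vstar :=
    maxprin c hcnn hcconn y ustar vstar g hgu hg0 heq
  have hmin : ∀ w, y ustar ≤ y w := by
    have heq' : ∀ w, ∑ z, c z w * ((-y) z - (-y) w) = -g w := by
      intro w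
      have h2 : ∑ z, c z w * ((-y) z - (-y) w) = -∑ z, c z w * (y z - y w) := by
        rw [← Finset.sum_neg_distrib]
        refine Finset.sum_congr rfl fun z _ => ?_
        simp only [Pi.neg_apply]
        ring
      rw [h2, heq w]
    have h := maxprin c hcnn hcconn (-y) vstar ustar (fun w => -g w)
      (by simpa using hgv) (fun w h1 h2 => show -g w = 0 by rw [hg0 w h2 h1, neg_zero]) heq'
    intro w
    have := h w
    simp only [Pi.neg_apply] at this
    linarith
  -- if y were everywhere nonpositive (or nonnegative), δ would vanish
  have hnz : ¬ (∀ v, y v = 0) := by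
    intro hall
    have h := heq ustar
    rw [Finset.sum_eq_zero (fun z _ => by rw [hall z, hall ustar]; ring)] at h
    linarith
  have hyv : 0 < y vstar := by
    by_contra h
    push_neg at h
    have hall : ∀ v, δ v ≤ 0 := by
      intro v
      rw [hδy v]
      exact mul_nonpos_of_nonpos_of_nonneg (le_trans (hmax v) h) (hpos v).le
    have hzero : ∀ v, δ v = 0 := fun v =>
      (Finset.sum_eq_zero_iff_of_nonpos (fun v _ => hall v)).1 hsumδ v (mem_univ v)
    exact hnz fun v => by simp only [hy, hzero v, zero_div]
  have hyu : y ustar < 0 := by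
    by_contra h
    push_neg at h
    have hall : ∀ v, 0 ≤ δ v := by
      intro v
      rw [hδy v]
      exact mul_nonneg (le_trans h (hmin v)) (hpos v).le
    have hzero : ∀ v, δ v = 0 := fun v =>
      (Finset.sum_eq_zero_iff_of_nonneg (fun v _ => hall v)).1 hsumδ v (mem_univ v)
    exact hnz fun v => by simp only [hy, hzero v, zero_div]
  constructor
  · rw [hδy ustar]
    exact mul_neg_of_neg_of_pos hyu (hpos ustar)
  · rw [hδy vstar]
    exact mul_pos hyv (hpos vstar)
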